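/- ♣_w and ♣_w† are equivalent; indeed, every ♣_w-sequence is already a ♣_w†-sequence. -/

import Mathlib

open Cardinal Set

/-- The first uncountable ordinal. -/
noncomputable def ω₁ : Ordinal := (aleph 1).ord

/-- The set of limit ordinals below `ω₁`. -/
def LimOmega1 : Set Ordinal := {γ | γ < ω₁ ∧ Order.IsSuccLimit γ}

/-- `C` is a club (closed unbounded) subset of `ω₁`. -/
def IsClubIn (C : Set Ordinal) : Prop :=
  C ⊆ Iio ω₁ ∧
    (∀ δ, δ < ω₁ → δ ≠ 0 → (∀ α < δ, ∃ β ∈ C, α < β ∧ β < δ) → δ ∈ C) ∧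
    (∀ α < ω₁, ∃ β ∈ C, α < β)

/-- `S` is a stationary subset of `ω₁`: it meets every club subset of `ω₁`. -/
def IsStatIn (S : Set Ordinal) : Prop :=
  S ⊆ Iio ω₁ ∧ ∀ C, IsClubIn C → (S ∩ C).Nonempty

/-- The set of ordinals `s` has order type `ω`. -/
def HasOtpOmega (s : Set Ordinal) : Prop :=
  Ordinal.type (Subrel ((· < ·) : Ordinal → Ordinal → Prop) (· ∈ s)) = Ordinal.omega0

/-- `x γ` is a cofinal subset of `γ` of order type `ω`. -/
def IsLadderAt (γ : Ordinal) (s : Set Ordinal) : Prop :=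
  s ⊆ Iio γ ∧ (∀ α < γ, ∃ β ∈ s, α ≤ β) ∧ HasOtpOmega s

/-- `(x γ)_{γ ∈ Lim(ω₁)}` is a `♣_w`-sequence. -/
def ClubWSeq (x : Ordinal → Set Ordinal) : Prop :=
  (∀ γ ∈ LimOmega1, IsLadderAt γ (x γ)) ∧
    ∀ y : Set Ordinal, y ⊆ Iio ω₁ → #y = aleph 1 →
      ∃ γ ∈ LimOmega1, (x γ \ y).Finite

/-- `(x γ)_{γ ∈ Lim(ω₁)}` is a `♣_w†`-sequence. -/
def ClubWDaggerSeq (x : Ordinal → Set Ordinal) : Prop :=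
  (∀ γ ∈ LimOmega1, IsLadderAt γ (x γ)) ∧
    ∀ y : Set Ordinal, y ⊆ Iio ω₁ → #y = aleph 1 →
      IsStatIn {γ ∈ LimOmega1 | (x γ \ y).Finite}

universe u v

lemma omega1_isLimit : Order.IsSuccLimit ω₁.{u} := Cardinal.isSuccLimit_ord (aleph0_le_aleph 1)

lemma card_lt_of_lt_omega1 {α : Ordinal.{u}} (h : α < ω₁) :
    Cardinal.lift.{u+1} α.card < aleph 1 := by
  have h1 : α.card < aleph 1 := Cardinal.lt_ord.1 h
  have := Cardinal.lift_lt.{u, u+1}.2 h1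
  rwa [Cardinal.lift_aleph, Ordinal.lift_one] at this

lemma unbounded_of_card {y : Set Ordinal.{u}} (hcard : #y = aleph 1) :
    ∀ α < ω₁, ∃ β ∈ y, α < β := by
  intro α hα
  by_contra h
  push_neg at h
  have hsub : y ⊆ Iio (Order.succ α) := fun β hβ => Order.lt_succ_iff.2 (h β hβ)
  have h1 : #y ≤ Cardinal.lift.{u+1} (Order.succ α).card := by
    rw [← Ordinal.mk_Iio_ordinal]
    exact mk_le_mk_of_subset hsub
  have h2 : Cardinal.lift.{u+1} (Order.succ α).card < aleph 1 :=
    card_lt_of_lt_omega1 (omega1_isLimit.succ_lt hα)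
  exact absurd (hcard ▸ lt_of_le_of_lt h1 h2) (lt_irrefl _)

lemma bounded_of_countable {s : Set Ordinal.{u}} (hs : s ⊆ Iio ω₁) (hc : #s < aleph 1) :
    ∃ α < ω₁.{u}, ∀ β ∈ s, β ≤ α := by
  rcases s.eq_empty_or_nonempty with rfl | hne
  · exact ⟨0, omega1_isLimit.pos, fun β hβ => absurd hβ (notMem_empty β)⟩
  · have hcount : s.Countable := (countable_iff_lt_aleph_one s).2 hc
    obtain ⟨f, hf⟩ := hcount.exists_eq_range hne
    refine ⟨iSup f, ?_, ?_⟩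
    · show iSup f < (aleph 1).ord
      apply Ordinal.iSup_lt_ord_lift
      · rw [Cardinal.mk_denumerable, Cardinal.lift_aleph0, Cardinal.isRegular_aleph_one.cof_eq]
        exact aleph0_lt_aleph_one
      · intro n
        exact hs (hf ▸ mem_range_self n)
    · intro β hβ
      rw [hf] at hβ
      obtain ⟨n, rfl⟩ := hβ
      exact Ordinal.le_iSup f n

lemma clubWSeq_to_dagger {x : Ordinal → Set Ordinal} (hx : ClubWSeq x) :
    ClubWDaggerSeq x := by
  obtain ⟨hlad, hw⟩ := hx
  refine ⟨hlad, fun y hy hcard => ?_⟩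
  refine ⟨fun γ hγ => hγ.1.1, fun C hC => ?_⟩
  obtain ⟨hCsub, hCclosed, hCunb⟩ := hC
  -- the thinned set
  set y' : Set Ordinal := {β ∈ y | ∃ c ∈ C, c < β ∧ ∀ z ∈ y, z ≤ c ∨ β ≤ z} with hy'def
  have hy'sub : y' ⊆ y := sep_subset _ _
  have hyunb := unbounded_of_card hcard
  -- y' is unbounded in ω₁
  have hy'unb : ∀ α < ω₁, ∃ β ∈ y', α < β := by
    intro α hα
    obtain ⟨c, hcC, hαc⟩ := hCunb α hα
    have hcω : c < ω₁ := hCsub hcC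
    have hT : {z ∈ y | c < z}.Nonempty := by
      obtain ⟨z, hz, hcz⟩ := hyunb c hcω
      exact ⟨z, hz, hcz⟩
    set β := sInf {z ∈ y | c < z} with hβdef
    have hβmem : β ∈ {z ∈ y | c < z} := csInf_mem hT
    refine ⟨β, ⟨hβmem.1, c, hcC, hβmem.2, ?_⟩, lt_trans hαc hβmem.2⟩
    intro z hz
    rcases le_or_gt z c with h | h
    · exact Or.inl h
    · exact Or.inr (csInf_le (OrderBot.bddBelow _) ⟨hz, h⟩)
  -- y' has cardinality ℵ₁
  have hy'card : #y' = aleph 1 := by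
    refine le_antisymm (hcard ▸ mk_le_mk_of_subset hy'sub) ?_
    by_contra h
    push_neg at h
    obtain ⟨α, hα, hbd⟩ := bounded_of_countable (hy'sub.trans hy) h
    obtain ⟨β, hβ, hαβ⟩ := hy'unb α hα
    exact absurd (hbd β hβ) (not_le.2 hαβ)
  -- apply ♣_w to y'
  obtain ⟨γ, hγLim, hfin⟩ := hw y' (hy'sub.trans hy) hy'card
  obtain ⟨hsub, hcof, -⟩ := hlad γ hγLim
  obtain ⟨hγlt, hγlim⟩ := hγLim
  -- x γ ∩ y' is cofinal in γ
  have hcof' : ∀ α < γ, ∃ β, β ∈ x γ ∧ β ∈ y' ∧ α ≤ β := by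
    intro α hα
    by_contra h
    push_neg at h
    have hTsub : {β ∈ x γ | α ≤ β} ⊆ x γ \ y' := by
      rintro β ⟨hβx, hαβ⟩
      refine ⟨hβx, fun hβy' => ?_⟩
      exact absurd hαβ (not_le.2 (lt_of_le_of_ne (le_of_not_gt fun hc =>
        absurd hαβ (not_le.2 (by exact absurd (h β hβx hβy') (not_lt.2 hαβ)))) 
        (by exact fun he => absurd (h β hβx hβy') (not_lt.2 hαβ))))
    have hTfin : {β ∈ x γ | α ≤ β}.Finite := hfin.subset hTsub
    have hTne : {β ∈ x γ | α ≤ β}.Nonempty := by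
      obtain ⟨β, hβ, hαβ⟩ := hcof α hα
      exact ⟨β, hβ, hαβ⟩
    have hm := hTne.csSup_mem hTfin
    set m := sSup {β ∈ x γ | α ≤ β} with hmdef
    have hmγ : m < γ := hsub hm.1
    obtain ⟨β, hβx, hβge⟩ := hcof (Order.succ m) (hγlim.succ_lt hmγ)
    have hβT : β ∈ {β ∈ x γ | α ≤ β} :=
      ⟨hβx, le_trans hm.2 (le_trans (Order.le_succ m) hβge)⟩
    have : β ≤ m := le_csSup (hTfin.bddAbove) hβT
    exact absurd (lt_of_lt_of_le (Order.lt_succ m) hβge) (not_lt.2 this)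
  -- γ is a limit of points in C, hence γ ∈ C
  have hγC : γ ∈ C := by
    refine hCclosed γ hγlt hγlim.pos.ne' ?_
    intro α hα
    obtain ⟨β, hβx, hβy', hβge⟩ := hcof' (Order.succ α) (hγlim.succ_lt hα)
    have hβγ : β < γ := hsub hβx
    obtain ⟨β'', hβ''x, hβ''y', hβ''ge⟩ := hcof' (Order.succ β) (hγlim.succ_lt hβγ)
    obtain ⟨hβ''y, c, hcC, hcβ'', hsep⟩ := hβ''y'
    have hββ'' : β < β'' := lt_of_lt_of_le (Order.lt_succ β) hβ''ge
    have hβc : β ≤ c := by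
      rcases hsep β hβy'.1 with h | h
      · exact h
      · exact absurd hββ'' (not_lt.2 h)
    exact ⟨c, hcC, lt_of_lt_of_le (lt_of_lt_of_le (Order.lt_succ α) hβge) hβc,
      lt_trans hcβ'' (hsub hβ''x)⟩
  exact ⟨γ, ⟨⟨hγlt, hγlim⟩, hfin.subset (diff_subset_diff_right hy'sub)⟩, hγC⟩

lemma olift_injective : Function.Injective (Ordinal.lift.{v, u}) :=
  fun _ _ h => Ordinal.lift_inj.1 h

lemma lift_omega1 : Ordinal.lift.{v, u} ω₁ = ω₁ := by
  show Ordinal.lift.{v, u} (aleph 1).ord = (aleph 1).ord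
  rw [Cardinal.lift_ord, Cardinal.lift_aleph, Ordinal.lift_one]

lemma subrel_iso (s : Set Ordinal.{u}) :
    Nonempty ((Subrel ((· < ·) : Ordinal.{u} → _ → Prop) (· ∈ s)) ≃r
      (Subrel ((· < ·) : Ordinal.{max u v} → _ → Prop) (· ∈ Ordinal.lift.{v, u} '' s))) := by
  refine ⟨⟨Equiv.Set.image _ s olift_injective, ?_⟩⟩
  rintro ⟨a, ha⟩ ⟨b, hb⟩
  simp only [Subrel, Order.Preimage, Equiv.Set.image, Equiv.Set.imageOfInjOn, Equiv.coe_fn_mk]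
  exact Ordinal.lift_lt

/-- Transfer of order type `ω` along `Ordinal.lift`. -/
lemma hasOtpOmega_lift_image {s : Set Ordinal.{u}} :
    HasOtpOmega (Ordinal.lift.{v, u} '' s) ↔ HasOtpOmega s := by
  have key := (Ordinal.lift_type_eq.{u+1, max u v + 1, u+1}).2 (subrel_iso.{u, v} s)
  unfold HasOtpOmega
  constructor
  · intro h
    rw [h, Ordinal.lift_omega0, ← Ordinal.lift_omega0.{max u v + 1, u+1}] at key
    exact Ordinal.lift_inj.1 key
  · intro h
    rw [h] at key
    rw [Ordinal.lift_omega0] at key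
    rw [← Ordinal.lift_omega0.{u+1, max u v + 1}] at key
    exact (Ordinal.lift_inj.1 key.symm)

/-- Transfer of cardinality `ℵ₁` along `Ordinal.lift`. -/
lemma mk_lift_image_eq_aleph_one_iff {s : Set Ordinal.{u}} :
    #(Ordinal.lift.{v, u} '' s) = aleph 1 ↔ #s = aleph 1 := by
  have h := Cardinal.mk_image_eq_lift (Ordinal.lift.{v, u}) s olift_injective
  have e1 : Cardinal.lift.{max u v + 1} (aleph (1 : Ordinal.{u+1})) = aleph 1 := by simp
  have e2 : Cardinal.lift.{u+1} (aleph (1 : Ordinal.{max u v + 1})) = aleph 1 := by simp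
  constructor
  · intro H
    rw [H, e2] at h
    exact (Cardinal.lift_inj.1 (e1.trans h)).symm
  · intro H
    rw [H, e1, ← e2] at h
    exact Cardinal.lift_inj.1 h

open scoped Classical in
/-- Inverse of `Ordinal.lift` on its range. -/
noncomputable def invL (γ : Ordinal.{max u v}) : Ordinal.{u} :=
  if h : ∃ a : Ordinal.{u}, Ordinal.lift.{v, u} a = γ then h.choose else 0

lemma invL_lift (a : Ordinal.{u}) : invL.{u, v} (Ordinal.lift.{v, u} a) = a := by
  have h : ∃ b : Ordinal.{u}, Ordinal.lift.{v, u} b = Ordinal.lift.{v, u} a := ⟨a, rfl⟩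
  rw [invL, dif_pos h]
  exact olift_injective h.choose_spec

lemma mem_limOmega1_lift {γ : Ordinal.{u}} :
    Ordinal.lift.{v, u} γ ∈ LimOmega1 ↔ γ ∈ LimOmega1 := by
  constructor
  · rintro ⟨h1, h2⟩
    exact ⟨by rwa [← lift_omega1.{u, v}, Ordinal.lift_lt] at h1, Ordinal.isSuccLimit_lift.1 h2⟩
  · rintro ⟨h1, h2⟩
    exact ⟨by rw [← lift_omega1.{u, v}]; exact Ordinal.lift_lt.2 h1, Ordinal.isSuccLimit_lift.2 h2⟩

/-- Transfer a `♣_w`-sequence up along `Ordinal.lift`. -/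
lemma clubWSeq_up {x : Ordinal.{u} → Set Ordinal.{u}} (hx : ClubWSeq x) :
    ClubWSeq (fun γ : Ordinal.{max u v} => Ordinal.lift.{v, u} '' x (invL.{u, v} γ)) := by
  obtain ⟨hlad, hw⟩ := hx
  constructor
  · rintro Γ hΓ
    obtain ⟨γ, hγω, rfl⟩ : ∃ γ < ω₁.{u}, Ordinal.lift.{v, u} γ = Γ := by
      have := hΓ.1
      rw [← lift_omega1.{u, v}] at this
      exact Ordinal.lt_lift_iff.1 this
    simp only [invL_lift]
    have hγLim : γ ∈ LimOmega1 := mem_limOmega1_lift.1 hΓ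
    obtain ⟨hsub, hcof, hotp⟩ := hlad γ hγLim
    refine ⟨?_, ?_, hasOtpOmega_lift_image.2 hotp⟩
    · rintro β ⟨b, hb, rfl⟩
      exact Ordinal.lift_lt.2 (hsub hb)
    · intro α hα
      obtain ⟨a, haγ, rfl⟩ := Ordinal.lt_lift_iff.1 hα
      obtain ⟨b, hbx, hab⟩ := hcof a haγ
      exact ⟨Ordinal.lift.{v} b, mem_image_of_mem _ hbx, Ordinal.lift_le.2 hab⟩
  · intro y hy hcard
    have hyr : y ⊆ range (Ordinal.lift.{v, u}) := by
      intro β hβ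
      have := hy hβ
      rw [mem_Iio, ← lift_omega1.{u, v}] at this
      obtain ⟨b, _, rfl⟩ := Ordinal.lt_lift_iff.1 this
      exact mem_range_self b
    have himg : Ordinal.lift.{v, u} '' (Ordinal.lift.{v, u} ⁻¹' y) = y :=
      image_preimage_eq_of_subset hyr
    set y₀ : Set Ordinal.{u} := Ordinal.lift.{v, u} ⁻¹' y with hy₀
    have hy₀sub : y₀ ⊆ Iio ω₁ := by
      intro b hb
      have := hy (mem_preimage.1 hb)
      rwa [mem_Iio, ← lift_omega1.{u, v}, Ordinal.lift_lt] at this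
    have hy₀card : #y₀ = aleph 1 := mk_lift_image_eq_aleph_one_iff.1 (himg ▸ hcard)
    obtain ⟨γ, hγLim, hfin⟩ := hw y₀ hy₀sub hy₀card
    refine ⟨Ordinal.lift.{v, u} γ, mem_limOmega1_lift.2 hγLim, ?_⟩
    simp only [invL_lift]
    rw [← himg, ← image_diff olift_injective]
    exact (hfin.image _)

/-- Transfer a `♣_w`-sequence down along `Ordinal.lift`. -/
lemma clubWSeq_down {X : Ordinal.{max u v} → Set Ordinal.{max u v}} (hX : ClubWSeq X) :
    ClubWSeq (fun γ : Ordinal.{u} => Ordinal.lift.{v, u} ⁻¹' X (Ordinal.lift.{v, u} γ)) := by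
  obtain ⟨hlad, hw⟩ := hX
  constructor
  · intro γ hγ
    obtain ⟨hsub, hcof, hotp⟩ := hlad (Ordinal.lift.{v, u} γ) (mem_limOmega1_lift.2 hγ)
    have hXr : X (Ordinal.lift.{v, u} γ) ⊆ range (Ordinal.lift.{v, u}) := by
      intro β hβ
      obtain ⟨b, _, rfl⟩ := Ordinal.lt_lift_iff.1 (hsub hβ)
      exact mem_range_self b
    have himg : Ordinal.lift.{v, u} '' (Ordinal.lift.{v, u} ⁻¹' X (Ordinal.lift.{v, u} γ)) =
        X (Ordinal.lift.{v, u} γ) := image_preimage_eq_of_subset hXr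
    refine ⟨?_, ?_, ?_⟩
    · intro b hb
      have := hsub (mem_preimage.1 hb)
      rwa [mem_Iio, Ordinal.lift_lt] at this
    · intro a ha
      obtain ⟨β, hβX, hβge⟩ := hcof (Ordinal.lift.{v, u} a) (Ordinal.lift_lt.2 ha)
      obtain ⟨b, hb, rfl⟩ := hXr hβX
      exact ⟨b, mem_preimage.2 hβX, Ordinal.lift_le.1 hβge⟩
    · exact hasOtpOmega_lift_image.1 (himg ▸ hotp)
  · intro y₀ hy₀ hcard₀
    set y : Set Ordinal.{max u v} := Ordinal.lift.{v, u} '' y₀ with hydef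
    have hysub : y ⊆ Iio ω₁ := by
      rintro β ⟨b, hb, rfl⟩
      rw [mem_Iio, ← lift_omega1.{u, v}]
      exact Ordinal.lift_lt.2 (hy₀ hb)
    have hycard : #y = aleph 1 := mk_lift_image_eq_aleph_one_iff.2 hcard₀
    obtain ⟨Γ, hΓLim, hfin⟩ := hw y hysub hycard
    obtain ⟨γ, hγω, rfl⟩ : ∃ γ < ω₁.{u}, Ordinal.lift.{v, u} γ = Γ := by
      have := hΓLim.1
      rw [← lift_omega1.{u, v}] at this
      exact Ordinal.lt_lift_iff.1 this
    refine ⟨γ, mem_limOmega1_lift.1 hΓLim, ?_⟩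
    have heq : (fun γ : Ordinal.{u} => Ordinal.lift.{v, u} ⁻¹' X (Ordinal.lift.{v, u} γ)) γ \ y₀
        = Ordinal.lift.{v, u} ⁻¹' (X (Ordinal.lift.{v, u} γ) \ y) := by
      rw [preimage_diff, hydef, preimage_image_eq _ olift_injective]
    rw [heq]
    exact hfin.preimage olift_injective.injOn

/-- Existence of a `♣_w`-sequence transfers between universes. -/
lemma exists_clubWSeq_transfer :
    (∃ x : Ordinal.{u} → Set Ordinal.{u}, ClubWSeq x) →
      ∃ x : Ordinal.{v} → Set Ordinal.{v}, ClubWSeq x := by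
  rintro ⟨x, hx⟩
  have h1 := clubWSeq_up.{u, v} hx
  have h2 := clubWSeq_down.{v, u} h1
  exact ⟨_, h2⟩

lemma iio_omega1_club : IsClubIn (Iio ω₁.{u}) := by
  refine ⟨subset_rfl, fun δ hδ _ _ => hδ, fun α hα => ?_⟩
  exact ⟨Order.succ α, omega1_isLimit.succ_lt hα, Order.lt_succ α⟩

theorem clubWSeq_iff_clubWDaggerSeq :
    (∀ x, ClubWSeq x → ClubWDaggerSeq x) ∧
      ((∃ x, ClubWSeq x) ↔ ∃ x, ClubWDaggerSeq x) := by
  refine ⟨fun x hx => clubWSeq_to_dagger hx, ?_, ?_⟩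
  · rintro ⟨x, hx⟩
    obtain ⟨x', hx'⟩ := exists_clubWSeq_transfer ⟨x, hx⟩
    exact ⟨x', clubWSeq_to_dagger hx'⟩
  · rintro ⟨x, hlad, hst⟩
    have hx : ClubWSeq x := ⟨hlad, fun y hy hcard => by
      obtain ⟨γ, ⟨hγLim, hγfin⟩, -⟩ := (hst y hy hcard).2 (Iio ω₁) iio_omega1_club
      exact ⟨γ, hγLim, hγfin⟩⟩
    exact exists_clubWSeq_transfer ⟨x, hx⟩
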